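/- For odd t ≥ 1, there exists a homomorphism ψ from the disjoint union F_1 of two isolated vertices and t copies of P_{t+2} to P_t such that for every normalized P_t-polymatroidal function p, Σ_{S ⊆ MaxCliques(F_1)} −(−1)^{|S|} p(ψ(∩S)) = t+2. -/

import Mathlib

/-- `F₁ t`: the disjoint union of two isolated vertices and `t` copies of the
path `P_{t+2}` (the path with `t+2` edges, i.e. `SimpleGraph.pathGraph (t+3)`). -/
def F₁ (t : ℕ) : SimpleGraph (Fin 2 ⊕ Fin t × Fin (t + 3)) :=
  (⊥ : SimpleGraph (Fin 2)) ⊕g ((⊥ : SimpleGraph (Fin t)) □ SimpleGraph.pathGraph (t + 3))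

open Classical in
/-- The maximal cliques of a finite graph `F`, as a finset of finsets. -/
noncomputable def maxCliques {V : Type*} [Fintype V] (F : SimpleGraph V) :
    Finset (Finset V) :=
  Finset.univ.filter fun s =>
    F.IsClique (s : Set V) ∧ ∀ u : V, F.IsClique (insert u (s : Set V)) → u ∈ s

open Classical in
/-- `Σ_{∅ ≠ S ⊆ MaxCliques(F)} −(−1)^{|S|} p(φ(∩S))`, where `∩S` is the common
intersection of the cliques in `S` and `φ(·)` denotes the image under `φ`. -/
noncomputable def cliqueSum {V W : Type*} [Fintype V] [DecidableEq V]
    [DecidableEq W] (F : SimpleGraph V) (p : Finset W → ℝ) (φ : V → W) : ℝ :=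
  ∑ S ∈ (maxCliques F).powerset.filter (· ≠ ∅),
    -(-1 : ℝ) ^ S.card * p ((S.inf id).image φ)

/-- A normalized `F`-polymatroidal function. -/
def IsPolymatroidal {V : Type*} [Fintype V] [DecidableEq V]
    (F : SimpleGraph V) (p : Finset V → ℝ) : Prop :=
  p ∅ = 0 ∧ p Finset.univ = 1 ∧
  (∀ A B : Finset V, A ⊆ B → p A ≤ p B) ∧
  (∀ A B : Finset V, p (A ∩ B) + p (A ∪ B) ≤ p A + p B) ∧
  (∀ A B : Finset V, (∀ a ∈ A \ B, ∀ b ∈ B \ A, ¬F.Adj a b) →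
    p (A ∩ B) + p (A ∪ B) = p A + p B)

namespace EHC
open Finset

lemma F₁_adj_inr {t : ℕ} {i j : Fin t} {a b : Fin (t+3)} :
    (F₁ t).Adj (Sum.inr (i, a)) (Sum.inr (j, b)) ↔
      i = j ∧ ((a : ℕ) + 1 = b ∨ (b : ℕ) + 1 = a) := by
  show ((⊥ : SimpleGraph (Fin t)) □ SimpleGraph.pathGraph (t + 3)).Adj (i, a) (j, b) ↔ _
  rw [SimpleGraph.boxProd_adj]
  simp [SimpleGraph.pathGraph_adj, and_comm]

lemma F₁_not_adj_inl_left {t : ℕ} {j : Fin 2} {v} : ¬ (F₁ t).Adj (Sum.inl j) v := by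
  cases v <;> intro h <;> simp [F₁, SimpleGraph.sum] at h

lemma F₁_not_adj_inl_right {t : ℕ} {j : Fin 2} {v} : ¬ (F₁ t).Adj v (Sum.inl j) := by
  cases v <;> intro h <;> simp [F₁, SimpleGraph.sum] at h

def Ecl (t : ℕ) : (Fin 2 ⊕ Fin t × Fin (t + 2)) → Finset (Fin 2 ⊕ Fin t × Fin (t + 3))
  | .inl j => {Sum.inl j}
  | .inr (i, a) => {Sum.inr (i, a.castSucc), Sum.inr (i, a.succ)}

variable {t : ℕ}

lemma maxCliques_F₁ (t : ℕ) :
    maxCliques (F₁ t) = Finset.image (Ecl t) Finset.univ := by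
  ext s
  simp only [maxCliques, Finset.mem_filter, Finset.mem_univ, true_and, Finset.mem_image,
    exists_prop]
  constructor
  · rintro ⟨hcl, hmax⟩
    -- s is nonempty
    have hne : s.Nonempty := by
      rcases s.eq_empty_or_nonempty with rfl | h
      · exfalso
        have := hmax (Sum.inl 0) (by simp)
        simp at this
      · exact h
    obtain ⟨v, hv⟩ := hne
    obtain (j | ⟨i, b⟩) := v
    ·
      have hs : s = {Sum.inl j} := by
        apply Finset.eq_singleton_iff_unique_mem.mpr
        refine ⟨hv, fun w hw => ?_⟩
        by_contra hne
        exact F₁_not_adj_inl_right (hcl (Finset.mem_coe.2 hw) (Finset.mem_coe.2 hv) hne)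
      exact ⟨Sum.inl j, by rw [hs]; rfl⟩
    ·
      by_cases hcard : ∃ w ∈ s, w ≠ Sum.inr (i, b)
      · obtain ⟨w, hw, hwne⟩ := hcard
        have hadj := hcl (Finset.mem_coe.2 hw) (Finset.mem_coe.2 hv) hwne
        obtain (k | ⟨i', b'⟩) := w
        · exact absurd hadj F₁_not_adj_inl_left
        ·
          rw [F₁_adj_inr] at hadj
          obtain ⟨hii, hb⟩ := hadj
          rw [hii] at hw
          have hsub : s = {Sum.inr (i, b), Sum.inr (i, b')} := by
            apply Finset.Subset.antisymm
            · intro x hx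
              simp only [Finset.mem_insert, Finset.mem_singleton]
              by_contra hx2
              push_neg at hx2
              obtain ⟨hx3, hx4⟩ := hx2
              have a1 := hcl (Finset.mem_coe.2 hx) (Finset.mem_coe.2 hv) hx3
              have a2 := hcl (Finset.mem_coe.2 hx) (Finset.mem_coe.2 hw) hx4
              obtain (k | ⟨i'', c⟩) := x
              · exact F₁_not_adj_inl_left a1
              ·
                rw [F₁_adj_inr] at a1 a2
                obtain ⟨rfl, hc1⟩ := a1
                obtain ⟨-, hc2⟩ := a2
                omega
            · intro x hx
              simp only [Finset.mem_insert, Finset.mem_singleton] at hx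
              rcases hx with rfl | rfl
              · exact hv
              · exact hw
          rcases hb with hb | hb
          · -- b' + 1 = b, so edge is (b', b)
            have hb'lt : (b' : ℕ) < t + 2 := by have := b.isLt; omega
            refine ⟨Sum.inr (i, ⟨b', hb'lt⟩), ?_⟩
            have e1 : Fin.castSucc ⟨(b' : ℕ), hb'lt⟩ = b' := by apply Fin.ext; simp
            have e2 : Fin.succ ⟨(b' : ℕ), hb'lt⟩ = b := by apply Fin.ext; simp [Fin.val_succ]; omega
            rw [show (Ecl t (Sum.inr (i, ⟨(b' : ℕ), hb'lt⟩))) = {Sum.inr (i, Fin.castSucc ⟨(b' : ℕ), hb'lt⟩), Sum.inr (i, Fin.succ ⟨(b' : ℕ), hb'lt⟩)} from rfl, e1, e2, hsub, Finset.pair_comm]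
          · -- b + 1 = b'
            have hblt : (b : ℕ) < t + 2 := by have := b'.isLt; omega
            refine ⟨Sum.inr (i, ⟨b, hblt⟩), ?_⟩
            have e1 : Fin.castSucc ⟨(b : ℕ), hblt⟩ = b := by apply Fin.ext; simp
            have e2 : Fin.succ ⟨(b : ℕ), hblt⟩ = b' := by apply Fin.ext; simp [Fin.val_succ]; omega
            rw [show (Ecl t (Sum.inr (i, ⟨(b : ℕ), hblt⟩))) = {Sum.inr (i, Fin.castSucc ⟨(b : ℕ), hblt⟩), Sum.inr (i, Fin.succ ⟨(b : ℕ), hblt⟩)} from rfl, e1, e2, hsub]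
      · -- s = {inr (i,b)} : contradiction with maximality
        exfalso
        push_neg at hcard
        -- pick a neighbor
        have hblt := b.isLt
        set c : Fin (t+3) := if hb0 : (b : ℕ) = 0 then ⟨1, by omega⟩ else ⟨(b : ℕ) - 1, by omega⟩ with hc
        have hadj : (F₁ t).Adj (Sum.inr (i, c)) (Sum.inr (i, b)) := by
          rw [F₁_adj_inr]
          refine ⟨rfl, ?_⟩
          rw [hc]; by_cases hb0 : (b : ℕ) = 0
          · rw [dif_pos hb0]; show (1:ℕ) + 1 = (b:ℕ) ∨ (b:ℕ) + 1 = 1; omega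
          · rw [dif_neg hb0]; show (b:ℕ) - 1 + 1 = (b:ℕ) ∨ (b:ℕ) + 1 = (b:ℕ) - 1; omega
        have hcb : Sum.inr (i, c) ∉ s := by
          intro hmem
          have := hcard _ hmem
          rw [Sum.inr.injEq, Prod.mk.injEq] at this
          have : c = b := this.2
          rw [hc] at this
          have := congrArg Fin.val this
          split at this <;> simp at this <;> omega
        apply hcb
        apply hmax
        intro x hx y hy hxy
        rcases Set.mem_insert_iff.1 hx with rfl | hx <;>
          rcases Set.mem_insert_iff.1 hy with rfl | hy
        · exact absurd rfl hxy
        · have : y = Sum.inr (i, b) := hcard y (Finset.mem_coe.1 hy)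
          rw [this]; exact hadj
        · have : x = Sum.inr (i, b) := hcard x (Finset.mem_coe.1 hx)
          rw [this]; exact hadj.symm
        · exact hcl hx hy hxy
  · rintro ⟨c, -, rfl⟩
    obtain (j | ⟨i, a⟩) := c
    · constructor
      · simp only [Ecl, Finset.coe_singleton]
        exact SimpleGraph.isClique_singleton _
      · intro u hu
        simp only [Ecl, Finset.coe_singleton] at hu
        by_contra hus
        have hne : u ≠ Sum.inl j := by
          intro h; apply hus; rw [h]; simp [Ecl]
        have := hu (Set.mem_insert _ _) (by simp) hne
        exact F₁_not_adj_inl_right this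
    · constructor
      · simp only [Ecl, Finset.coe_insert, Finset.coe_singleton]
        rw [SimpleGraph.isClique_pair]
        intro _
        rw [F₁_adj_inr]
        exact ⟨rfl, Or.inl (by simp)⟩
      · intro u hu
        simp only [Ecl, Finset.coe_insert, Finset.coe_singleton] at hu ⊢
        by_contra hus
        have h1 : u ≠ Sum.inr (i, a.castSucc) := fun h => hus (by simp [h])
        have h2 : u ≠ Sum.inr (i, a.succ) := fun h => hus (by simp [h])
        have a1 := hu (Set.mem_insert _ _) (by simp) h1
        have a2 := hu (Set.mem_insert _ _) (by simp) h2
        obtain (k | ⟨i'', d⟩) := u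
        · exact F₁_not_adj_inl_left a1
        ·
          rw [F₁_adj_inr] at a1 a2
          obtain ⟨rfl, e1⟩ := a1
          obtain ⟨-, e2⟩ := a2
          simp only [Fin.coe_castSucc, Fin.val_succ] at e1 e2
          omega

end EHC

namespace EHC
open Finset


lemma subset_pair {α : Type*} [DecidableEq α] {s : Finset α} {x y : α} (h : s ⊆ {x, y}) :
    s = ∅ ∨ s = {x} ∨ s = {y} ∨ s = {x, y} := by
  by_cases hx : x ∈ s <;> by_cases hy : y ∈ s
  · refine Or.inr (Or.inr (Or.inr ?_))
    exact Finset.Subset.antisymm h (Finset.insert_subset hx (Finset.singleton_subset_iff.2 hy))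
  · refine Or.inr (Or.inl ?_)
    apply Finset.Subset.antisymm
    · intro z hz
      rcases Finset.mem_insert.1 (h hz) with rfl | hz2
      · exact Finset.mem_singleton_self _
      · rw [Finset.mem_singleton] at hz2; subst hz2; exact absurd hz hy
    · exact Finset.singleton_subset_iff.2 hx
  · refine Or.inr (Or.inr (Or.inl ?_))
    apply Finset.Subset.antisymm
    · intro z hz
      rcases Finset.mem_insert.1 (h hz) with rfl | hz2
      · exact absurd hz hx
      · exact hz2
    · exact Finset.singleton_subset_iff.2 hy
  · refine Or.inl (Finset.eq_empty_iff_forall_notMem.2 fun z hz => ?_)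
    rcases Finset.mem_insert.1 (h hz) with rfl | hz2
    · exact hx hz
    · rw [Finset.mem_singleton] at hz2; subst hz2; exact hy hz

variable {t : ℕ}

abbrev Tidx (t : ℕ) := (Fin 2 ⊕ Fin t × Fin (t + 2)) ⊕ (Fin t × Fin (t + 1))

def gcl (t : ℕ) : Tidx t → Finset (Finset (Fin 2 ⊕ Fin t × Fin (t + 3)))
  | .inl c => {Ecl t c}
  | .inr (i, a) => {Ecl t (Sum.inr (i, a.castSucc)), Ecl t (Sum.inr (i, a.succ))}

lemma Ecl_injective (t : ℕ) : Function.Injective (Ecl t) := by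
  rintro (j | ⟨i, a⟩) (k | ⟨i', b⟩) h <;> simp only [Ecl] at h
  · simpa using h
  · exfalso
    have : (Sum.inl j : Fin 2 ⊕ Fin t × Fin (t+3)) ∈ ({Sum.inr (i', b.castSucc), Sum.inr (i', b.succ)} : Finset _) := h ▸ Finset.mem_singleton_self _
    simp at this
  · exfalso
    have : (Sum.inl k : Fin 2 ⊕ Fin t × Fin (t+3)) ∈ ({Sum.inr (i, a.castSucc), Sum.inr (i, a.succ)} : Finset _) := h ▸ Finset.mem_singleton_self _
    simp at this
  · have h1 : (Sum.inr (i, a.castSucc) : Fin 2 ⊕ Fin t × Fin (t+3)) ∈ ({Sum.inr (i', b.castSucc), Sum.inr (i', b.succ)} : Finset _) := by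
      rw [← h]; simp
    have h2 : (Sum.inr (i, a.succ) : Fin 2 ⊕ Fin t × Fin (t+3)) ∈ ({Sum.inr (i', b.castSucc), Sum.inr (i', b.succ)} : Finset _) := by
      rw [← h]; simp
    simp only [Finset.mem_insert, Finset.mem_singleton, Sum.inr.injEq, Prod.mk.injEq] at h1 h2
    have hb1 : i = i' := by rcases h1 with ⟨h,_⟩|⟨h,_⟩ <;> exact h
    subst hb1
    have : a = b := by
      rcases h1 with ⟨-,h1⟩|⟨-,h1⟩ <;> rcases h2 with ⟨-,h2⟩|⟨-,h2⟩ <;>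
      · apply Fin.ext
        have v1 := congrArg Fin.val h1
        have v2 := congrArg Fin.val h2
        simp only [Fin.coe_castSucc, Fin.val_succ] at v1 v2
        omega
    rw [this]

lemma Ecl_ne {i : Fin t} {a b : Fin (t+2)} (h : a ≠ b) :
    Ecl t (Sum.inr (i, a)) ≠ Ecl t (Sum.inr (i, b)) :=
  fun hc => h (by have := Ecl_injective t hc; simpa using this)

lemma gcl_injective (t : ℕ) : Function.Injective (gcl t) := by
  rintro (c | ⟨i, a⟩) (c' | ⟨i', a'⟩) h <;> simp only [gcl] at h
  · rw [Finset.singleton_inj] at h; rw [Ecl_injective t h]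
  · exfalso
    have h1 : Ecl t (Sum.inr (i', a'.castSucc)) ∈ ({Ecl t c} : Finset _) := by rw [h]; simp
    have h2 : Ecl t (Sum.inr (i', a'.succ)) ∈ ({Ecl t c} : Finset _) := by rw [h]; simp
    rw [Finset.mem_singleton] at h1 h2
    have := Ecl_injective t (h1.trans h2.symm)
    simp only [Sum.inr.injEq, Prod.mk.injEq] at this
    exact absurd this.2 (by intro hc; have := congrArg Fin.val hc; simp [Fin.val_succ] at this)
  · exfalso
    have h1 : Ecl t (Sum.inr (i, a.castSucc)) ∈ ({Ecl t c'} : Finset _) := by rw [← h]; simp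
    have h2 : Ecl t (Sum.inr (i, a.succ)) ∈ ({Ecl t c'} : Finset _) := by rw [← h]; simp
    rw [Finset.mem_singleton] at h1 h2
    have := Ecl_injective t (h1.trans h2.symm)
    simp only [Sum.inr.injEq, Prod.mk.injEq] at this
    exact absurd this.2 (by intro hc; have := congrArg Fin.val hc; simp [Fin.val_succ] at this)
  · have h1 : Ecl t (Sum.inr (i, a.castSucc)) ∈
        ({Ecl t (Sum.inr (i', a'.castSucc)), Ecl t (Sum.inr (i', a'.succ))} : Finset _) := by
      rw [← h]; simp
    have h2 : Ecl t (Sum.inr (i, a.succ)) ∈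
        ({Ecl t (Sum.inr (i', a'.castSucc)), Ecl t (Sum.inr (i', a'.succ))} : Finset _) := by
      rw [← h]; simp
    simp only [Finset.mem_insert, Finset.mem_singleton] at h1 h2
    have key : i = i' ∧ a = a' := by
      rcases h1 with h1 | h1 <;> rcases h2 with h2 | h2 <;>
      · have e1 := Ecl_injective t h1
        have e2 := Ecl_injective t h2
        simp only [Sum.inr.injEq, Prod.mk.injEq] at e1 e2
        refine ⟨e1.1, Fin.ext ?_⟩
        have v1 := congrArg Fin.val e1.2
        have v2 := congrArg Fin.val e2.2
        simp only [Fin.coe_castSucc, Fin.val_succ] at v1 v2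
        omega
    rw [key.1, key.2]

lemma mem_Ecl_inr {i : Fin t} {b : Fin (t+3)} {c : Fin 2 ⊕ Fin t × Fin (t+2)}
    (h : (Sum.inr (i, b) : Fin 2 ⊕ Fin t × Fin (t+3)) ∈ Ecl t c) :
    ∃ a : Fin (t+2), c = Sum.inr (i, a) ∧ ((a : ℕ) = b ∨ (a : ℕ) + 1 = b) := by
  obtain (j | ⟨i'', a⟩) := c
  · simp [Ecl] at h
  · simp only [Ecl, Finset.mem_insert, Finset.mem_singleton, Sum.inr.injEq, Prod.mk.injEq] at h
    refine ⟨a, ?_, ?_⟩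
    · rcases h with ⟨h1, -⟩ | ⟨h1, -⟩ <;> rw [h1]
    · rcases h with ⟨-, h2⟩ | ⟨-, h2⟩
      · exact Or.inl (by rw [h2]; rfl)
      · exact Or.inr (by rw [h2]; rfl)

lemma mem_Ecl_inl {j : Fin 2} {c : Fin 2 ⊕ Fin t × Fin (t+2)}
    (h : (Sum.inl j : Fin 2 ⊕ Fin t × Fin (t+3)) ∈ Ecl t c) : c = Sum.inl j := by
  obtain (j' | ⟨i'', a⟩) := c
  · simp only [Ecl, Finset.mem_singleton, Sum.inl.injEq] at h
    rw [h]
  · simp [Ecl] at h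

lemma vanish {S : Finset (Finset (Fin 2 ⊕ Fin t × Fin (t+3)))}
    (hS : S ⊆ maxCliques (F₁ t)) (hne : S ≠ ∅)
    (himg : S ∉ Finset.image (gcl t) Finset.univ) : S.inf id = ∅ := by
  by_contra hinf
  obtain ⟨v, hv⟩ := Finset.nonempty_iff_ne_empty.2 hinf
  have hmem : ∀ C ∈ S, v ∈ C := fun C hC =>
    Finset.le_iff_subset.1 (Finset.inf_le hC) hv
  apply himg
  have hEcl : ∀ C ∈ S, ∃ c, Ecl t c = C := by
    intro C hC
    have := hS hC
    rw [maxCliques_F₁ t] at this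
    obtain ⟨c, -, hc⟩ := Finset.mem_image.1 this
    exact ⟨c, hc⟩
  obtain (j | ⟨i, b⟩) := v
  · -- all cliques are {inl j}
    have hsub : S ⊆ {Ecl t (Sum.inl j)} := by
      intro C hC
      obtain ⟨c, rfl⟩ := hEcl C hC
      rw [Finset.mem_singleton, mem_Ecl_inl (hmem _ hC)]
    rcases Finset.subset_singleton_iff.1 hsub with rfl | rfl
    · exact absurd rfl hne
    · exact Finset.mem_image.2 ⟨Sum.inl (Sum.inl j), Finset.mem_univ _, rfl⟩
  · have hb3 := b.isLt
    by_cases h0 : (b : ℕ) = 0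
    · have hsub : S ⊆ {Ecl t (Sum.inr (i, ⟨0, by omega⟩))} := by
        intro C hC
        obtain ⟨c, rfl⟩ := hEcl C hC
        obtain ⟨a, rfl, ha⟩ := mem_Ecl_inr (hmem _ hC)
        rw [Finset.mem_singleton]
        have : a = ⟨0, by omega⟩ := Fin.ext (by show (a:ℕ) = 0; omega)
        rw [this]
      rcases Finset.subset_singleton_iff.1 hsub with rfl | rfl
      · exact absurd rfl hne
      · exact Finset.mem_image.2 ⟨Sum.inl (Sum.inr (i, ⟨0, by omega⟩)), Finset.mem_univ _, rfl⟩
    · by_cases h2 : (b : ℕ) = t + 2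
      · have hsub : S ⊆ {Ecl t (Sum.inr (i, ⟨t+1, by omega⟩))} := by
          intro C hC
          obtain ⟨c, rfl⟩ := hEcl C hC
          obtain ⟨a, rfl, ha⟩ := mem_Ecl_inr (hmem _ hC)
          rw [Finset.mem_singleton]
          have ha2 := a.isLt
          have : a = ⟨t+1, by omega⟩ := Fin.ext (by show (a:ℕ) = t+1; omega)
          rw [this]
        rcases Finset.subset_singleton_iff.1 hsub with rfl | rfl
        · exact absurd rfl hne
        · exact Finset.mem_image.2 ⟨Sum.inl (Sum.inr (i, ⟨t+1, by omega⟩)), Finset.mem_univ _, rfl⟩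
      · -- middle case : 1 ≤ b ≤ t+1
        set α : Fin (t+1) := ⟨(b : ℕ) - 1, by omega⟩ with hα
        have hsub : S ⊆ {Ecl t (Sum.inr (i, α.castSucc)), Ecl t (Sum.inr (i, α.succ))} := by
          intro C hC
          obtain ⟨c, rfl⟩ := hEcl C hC
          obtain ⟨a, rfl, ha⟩ := mem_Ecl_inr (hmem _ hC)
          simp only [Finset.mem_insert, Finset.mem_singleton]
          rcases ha with ha | ha
          · right
            have : a = α.succ := by
              apply Fin.ext
              simp only [Fin.val_succ, hα]
              omega
            rw [this]
          · left
            have : a = α.castSucc := by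
              apply Fin.ext
              simp only [Fin.coe_castSucc, hα]
              omega
            rw [this]
        rcases subset_pair hsub with rfl | rfl | rfl | rfl
        · exact absurd rfl hne
        · exact Finset.mem_image.2 ⟨Sum.inl (Sum.inr (i, α.castSucc)), Finset.mem_univ _, rfl⟩
        · exact Finset.mem_image.2 ⟨Sum.inl (Sum.inr (i, α.succ)), Finset.mem_univ _, rfl⟩
        · exact Finset.mem_image.2 ⟨Sum.inr (i, α), Finset.mem_univ _, rfl⟩

lemma gcl_mem_filter (x : Tidx t) :
    gcl t x ∈ (maxCliques (F₁ t)).powerset.filter (· ≠ ∅) := by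
  rw [Finset.mem_filter, Finset.mem_powerset]
  constructor
  · rw [maxCliques_F₁ t]
    obtain (c | ⟨i, a⟩) := x
    · intro C hC
      rw [gcl, Finset.mem_singleton] at hC
      exact Finset.mem_image.2 ⟨c, Finset.mem_univ _, hC.symm⟩
    · intro C hC
      rw [gcl] at hC
      rcases Finset.mem_insert.1 hC with rfl | hC
      · exact Finset.mem_image.2 ⟨_, Finset.mem_univ _, rfl⟩
      · rw [Finset.mem_singleton] at hC
        exact Finset.mem_image.2 ⟨_, Finset.mem_univ _, hC.symm⟩
  · obtain (c | ⟨i, a⟩) := x <;> simp [gcl]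

lemma cliqueSum_reduce (p : Finset (Fin (t+1)) → ℝ) (hp0 : p ∅ = 0)
    (φ : (Fin 2 ⊕ Fin t × Fin (t+3)) → Fin (t+1)) :
    cliqueSum (F₁ t) p φ =
      ∑ x : Tidx t, -(-1:ℝ)^((gcl t x).card) * p ((((gcl t x).inf id)).image φ) := by
  rw [cliqueSum]
  rw [← Finset.sum_image (g := gcl t) (s := Finset.univ)
      (f := fun S => -(-1:ℝ)^S.card * p ((S.inf id).image φ))
      (fun x _ y _ h => gcl_injective t h)]
  refine (Finset.sum_subset ?_ ?_).symm
  · intro S hS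
    obtain ⟨x, -, rfl⟩ := Finset.mem_image.1 hS
    exact gcl_mem_filter x
  · intro S hS hS2
    rw [Finset.mem_filter, Finset.mem_powerset] at hS
    rw [vanish hS.1 (by simpa using hS.2) hS2]
    simp [hp0]

def fn (i a : ℕ) : ℕ := if a ≤ i + 1 then a else a - 2

def en (i a : ℕ) : ℕ := if a ≤ i then a else if a ≤ i + 2 then i else a - 2

def ψf (t : ℕ) : (Fin 2 ⊕ Fin t × Fin (t + 3)) → Fin (t + 1)
  | .inl j => if j = 0 then ⟨0, Nat.succ_pos t⟩ else Fin.last t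
  | .inr (i, a) => ⟨fn i.val a.val, by
      have h1 := i.isLt; have h2 := a.isLt; unfold fn; split <;> omega⟩

def ψhom (t : ℕ) : F₁ t →g SimpleGraph.pathGraph (t + 1) where
  toFun := ψf t
  map_rel' := by
    rintro (j | ⟨i, a⟩) (k | ⟨i', b⟩) h
    · exact absurd h F₁_not_adj_inl_left
    · exact absurd h F₁_not_adj_inl_left
    · exact absurd h F₁_not_adj_inl_right
    · rw [F₁_adj_inr] at h
      obtain ⟨rfl, hab⟩ := h
      rw [SimpleGraph.pathGraph_adj]
      show fn i.val a.val + 1 = fn i.val b.val ∨ fn i.val b.val + 1 = fn i.val a.val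
      have h1 := i.isLt; have h2 := a.isLt; have h3 := b.isLt
      unfold fn; split <;> split <;> omega

section withp

variable (p : Finset (Fin (t+1)) → ℝ)

/-- `p {k}` (with clamping) -/
noncomputable def Qn (p : Finset (Fin (t+1)) → ℝ) (k : ℕ) : ℝ :=
  p {⟨min k t, by omega⟩}

/-- `p {k, k+1}` (with clamping) -/
noncomputable def Pn (p : Finset (Fin (t+1)) → ℝ) (k : ℕ) : ℝ :=
  p {⟨min k (t-1), by omega⟩, ⟨min (k+1) t, by omega⟩}

lemma pair_eq {α : Type*} [DecidableEq α] {x y x' y' : α} (hx : x = x') (hy : y = y') :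
    ({x, y} : Finset α) = {x', y'} := by rw [hx, hy]

lemma image_Ecl_inl_zero :
    ((Ecl t (Sum.inl 0)).image (ψf t)) = {(⟨min 0 t, by omega⟩ : Fin (t+1))} := by
  simp only [Ecl, Finset.image_singleton]
  congr 1

lemma image_Ecl_inl_one :
    ((Ecl t (Sum.inl 1)).image (ψf t)) = {(⟨min t t, by omega⟩ : Fin (t+1))} := by
  simp only [Ecl, Finset.image_singleton]
  have : ψf t (Sum.inl 1) = Fin.last t := rfl
  rw [this]
  congr 1
  apply Fin.ext
  show t = min t t
  simp

lemma image_Ecl_inr (i : Fin t) (a : Fin (t+2)) :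
    ((Ecl t (Sum.inr (i, a))).image (ψf t)) =
      {(⟨min (en i.val a.val) (t-1), by omega⟩ : Fin (t+1)),
       ⟨min (en i.val a.val + 1) t, by omega⟩} := by
  have hi := i.isLt
  have ha := a.isLt
  simp only [Ecl, Finset.image_insert, Finset.image_singleton]
  have e1 : ψf t (Sum.inr (i, a.castSucc)) = ⟨fn i.val a.val, by unfold fn; split <;> omega⟩ := rfl
  have e2 : ψf t (Sum.inr (i, a.succ)) = ⟨fn i.val (a.val+1), by unfold fn; split <;> omega⟩ := by
    apply Fin.ext
    show fn i.val (a.succ).val = fn i.val (a.val + 1)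
    rfl
  rw [e1, e2]
  by_cases h1 : a.val ≤ i.val
  · apply pair_eq <;> (rw [Fin.mk.injEq]; unfold fn en; split_ifs <;> omega)
  · by_cases h2 : a.val = i.val + 1
    · rw [Finset.pair_comm]
      apply pair_eq <;> (rw [Fin.mk.injEq]; unfold fn en; split_ifs <;> omega)
    · apply pair_eq <;> (rw [Fin.mk.injEq]; unfold fn en; split_ifs <;> omega)

end withp

lemma castSucc_ne_succ {n : ℕ} (a : Fin (n+1)) : a.castSucc ≠ a.succ := by
  intro h
  have := congrArg Fin.val h
  simp [Fin.coe_castSucc, Fin.val_succ] at this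

lemma card_gcl_inr (i : Fin t) (a : Fin (t+1)) : (gcl t (Sum.inr (i, a))).card = 2 := by
  rw [gcl]
  rw [Finset.card_insert_of_notMem, Finset.card_singleton]
  rw [Finset.mem_singleton]
  exact Ecl_ne (castSucc_ne_succ a)

lemma inf_gcl_inr (i : Fin t) (a : Fin (t+1)) :
    (gcl t (Sum.inr (i, a))).inf id =
      {(Sum.inr (i, ⟨a.val + 1, by omega⟩) : Fin 2 ⊕ Fin t × Fin (t+3))} := by
  rw [gcl, Finset.inf_insert, Finset.inf_singleton]
  show Ecl t (Sum.inr (i, a.castSucc)) ⊓ Ecl t (Sum.inr (i, a.succ)) = _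
  ext w
  simp only [Finset.inf_eq_inter, Finset.mem_inter, Ecl, Finset.mem_insert, Finset.mem_singleton]
  constructor
  · rintro ⟨h1 | h1, h2 | h2⟩ <;> subst h1 <;>
      simp only [Sum.inr.injEq, Prod.mk.injEq, true_and, Fin.ext_iff, Fin.coe_castSucc,
        Fin.val_succ, Fin.val_mk] at h2 ⊢ <;> omega
  · rintro rfl
    constructor
    · right
      simp only [Sum.inr.injEq, Prod.mk.injEq, true_and]
      rw [Fin.ext_iff]
      simp [Fin.val_succ]
    · left
      simp only [Sum.inr.injEq, Prod.mk.injEq, true_and]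
      rw [Fin.ext_iff]
      simp [Fin.val_succ]

lemma term_inl (p : Finset (Fin (t+1)) → ℝ) (c : Fin 2 ⊕ Fin t × Fin (t+2)) :
    -(-1:ℝ)^((gcl t (Sum.inl c)).card) * p (((gcl t (Sum.inl c)).inf id).image (ψf t)) =
      p ((Ecl t c).image (ψf t)) := by
  rw [gcl, Finset.card_singleton, Finset.inf_singleton]
  norm_num

lemma term_inr (p : Finset (Fin (t+1)) → ℝ) (i : Fin t) (a : Fin (t+1)) :
    -(-1:ℝ)^((gcl t (Sum.inr (i, a))).card) * p (((gcl t (Sum.inr (i, a))).inf id).image (ψf t)) =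
      -(Qn p (fn i.val (a.val + 1))) := by
  rw [card_gcl_inr, inf_gcl_inr, Finset.image_singleton]
  have : ψf t (Sum.inr (i, ⟨a.val + 1, by omega⟩)) = ⟨min (fn i.val (a.val+1)) t, by omega⟩ := by
    rw [Fin.ext_iff]
    show fn i.val (a.val + 1) = min (fn i.val (a.val+1)) t
    have h1 := i.isLt; have h2 := a.isLt
    unfold fn; split <;> omega
  rw [this, Qn]
  norm_num

lemma cliqueSum_value (p : Finset (Fin (t+1)) → ℝ) (hp0 : p ∅ = 0) :
    cliqueSum (F₁ t) p (ψf t) =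
      Qn p 0 + Qn p t
        + (∑ i : Fin t, ∑ a : Fin (t+2), Pn p (en i.val a.val))
        - ∑ i : Fin t, ∑ a : Fin (t+1), Qn p (fn i.val (a.val + 1)) := by
  rw [cliqueSum_reduce p hp0 (ψf t), Fintype.sum_sum_type]
  have h1 : (∑ c : Fin 2 ⊕ Fin t × Fin (t+2),
      -(-1:ℝ)^((gcl t (Sum.inl c)).card) * p (((gcl t (Sum.inl c)).inf id).image (ψf t)))
      = Qn p 0 + Qn p t + ∑ i : Fin t, ∑ a : Fin (t+2), Pn p (en i.val a.val) := by
    rw [Fintype.sum_sum_type]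
    congr 1
    · rw [Fin.sum_univ_two, term_inl, term_inl, image_Ecl_inl_zero, image_Ecl_inl_one]
      rfl
    · rw [Fintype.sum_prod_type]
      refine Finset.sum_congr rfl fun i _ => Finset.sum_congr rfl fun a _ => ?_
      rw [term_inl, image_Ecl_inr]
      rfl
  have h2 : (∑ y : Fin t × Fin (t+1),
      -(-1:ℝ)^((gcl t (Sum.inr y)).card) * p (((gcl t (Sum.inr y)).inf id).image (ψf t)))
      = - ∑ i : Fin t, ∑ a : Fin (t+1), Qn p (fn i.val (a.val + 1)) := by
    rw [Fintype.sum_prod_type, ← Finset.sum_neg_distrib]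
    refine Finset.sum_congr rfl fun i _ => ?_
    rw [← Finset.sum_neg_distrib]
    exact Finset.sum_congr rfl fun a _ => term_inr p i a
  rw [h1, h2]
  ring


def pre (t m : ℕ) : Finset (Fin (t+1)) := Finset.univ.filter (fun v => (v : ℕ) ≤ m)

lemma tele (ht1 : 1 ≤ t) (p : Finset (Fin (t+1)) → ℝ)
    (hp : IsPolymatroidal (SimpleGraph.pathGraph (t+1)) p) :
    ∀ m, m < t → p (pre t (m+1)) =
      (∑ j ∈ Finset.range (m+1), Pn p j) - ∑ k ∈ Finset.Ico 1 (m+1), Qn p k := by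
  intro m
  induction m with
  | zero =>
    intro h0
    have hb : pre t 1 = {(⟨0, by omega⟩ : Fin (t+1)), ⟨1, by omega⟩} := by
      ext v
      simp only [pre, Finset.mem_filter, Finset.mem_univ, true_and, Finset.mem_insert,
        Finset.mem_singleton, Fin.ext_iff, Fin.val_mk]
      omega
    have hP : Pn p 0 = p {(⟨0, by omega⟩ : Fin (t+1)), ⟨1, by omega⟩} := by
      rw [Pn]
      congr 1
      apply pair_eq <;> (rw [Fin.mk.injEq]; omega)
    rw [hb, Finset.sum_range_one, Finset.Ico_self, Finset.sum_empty, hP]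
    ring
  | succ m ih =>
    intro hm
    have ihv := ih (by omega)
    set A := pre t (m+1) with hA
    set B : Finset (Fin (t+1)) := {⟨m+1, by omega⟩, ⟨m+2, by omega⟩} with hB
    have hsep : ∀ a ∈ A \ B, ∀ b ∈ B \ A, ¬(SimpleGraph.pathGraph (t+1)).Adj a b := by
      intro a ha b hb
      rw [Finset.mem_sdiff] at ha hb
      simp only [hA, hB, pre, Finset.mem_filter, Finset.mem_univ, true_and, Finset.mem_insert,
        Finset.mem_singleton, Fin.ext_iff, Fin.val_mk, not_or] at ha hb
      rw [SimpleGraph.pathGraph_adj]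
      omega
    have hmod := hp.2.2.2.2 A B hsep
    have hAB : A ∩ B = {(⟨m+1, by omega⟩ : Fin (t+1))} := by
      ext v
      simp only [hA, hB, pre, Finset.mem_inter, Finset.mem_filter, Finset.mem_univ, true_and,
        Finset.mem_insert, Finset.mem_singleton, Fin.ext_iff, Fin.val_mk]
      omega
    have hAuB : A ∪ B = pre t (m+2) := by
      ext v
      have hv := v.isLt
      simp only [hA, hB, pre, Finset.mem_union, Finset.mem_filter, Finset.mem_univ, true_and,
        Finset.mem_insert, Finset.mem_singleton, Fin.ext_iff, Fin.val_mk]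
      omega
    have hpB : p B = Pn p (m+1) := by
      rw [hB, Pn]
      congr 1
      apply pair_eq <;> (rw [Fin.mk.injEq]; omega)
    have hpAB : p (A ∩ B) = Qn p (m+1) := by
      rw [hAB, Qn]
      congr 2
      rw [Fin.mk.injEq]
      omega
    rw [hAB] at hmod
    rw [hAuB] at hmod
    rw [← hAB, hpAB, hpB] at hmod
    rw [Finset.sum_range_succ, Finset.sum_Ico_succ_top (by omega : 1 ≤ m+1)]
    have : p (pre t (m+2)) = p A + Pn p (m+1) - Qn p (m+1) := by linarith
    rw [this, ihv]
    ring

lemma key_eq (ht1 : 1 ≤ t) (p : Finset (Fin (t+1)) → ℝ)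
    (hp : IsPolymatroidal (SimpleGraph.pathGraph (t+1)) p) :
    (∑ j ∈ Finset.range t, Pn p j) - (∑ k ∈ Finset.Ico 1 t, Qn p k) = 1 := by
  have h := tele ht1 p hp (t-1) (by omega)
  have ht : t - 1 + 1 = t := by omega
  rw [ht] at h
  have hu : pre t t = Finset.univ := by
    ext v
    simp only [pre, Finset.mem_filter, Finset.mem_univ, true_and, iff_true]
    exact Fin.is_le v
  rw [hu, hp.2.1] at h
  linarith

lemma sumP (p : Finset (Fin (t+1)) → ℝ) (i : ℕ) (hi : i < t) :
    ∑ a ∈ Finset.range (t+2), Pn p (en i a) =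
      (∑ j ∈ Finset.range t, Pn p j) + 2 * Pn p i := by
  rw [Finset.range_eq_Ico]
  rw [← Finset.sum_Ico_consecutive _ (Nat.zero_le i) (by omega : i ≤ t+2)]
  rw [← Finset.sum_Ico_consecutive _ (by omega : i ≤ i+3) (by omega : i+3 ≤ t+2)]
  have e1 : ∑ a ∈ Finset.Ico 0 i, Pn p (en i a) = ∑ a ∈ Finset.Ico 0 i, Pn p a :=
    Finset.sum_congr rfl fun a ha => by
      rw [Finset.mem_Ico] at ha; congr 1; unfold en; split_ifs <;> omega
  have e2 : ∑ a ∈ Finset.Ico i (i+3), Pn p (en i a) = 3 * Pn p i := by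
    rw [Finset.sum_Ico_eq_sum_range]
    have h3 : i + 3 - i = 3 := by omega
    rw [h3, Finset.sum_range_succ, Finset.sum_range_succ, Finset.sum_range_one]
    have f0 : en i (i + 0) = i := by unfold en; split_ifs <;> omega
    have f1 : en i (i + 1) = i := by unfold en; split_ifs <;> omega
    have f2 : en i (i + 2) = i := by unfold en; split_ifs <;> omega
    rw [f0, f1, f2]
    ring
  have e3 : ∑ a ∈ Finset.Ico (i+3) (t+2), Pn p (en i a) = ∑ a ∈ Finset.Ico (i+1) t, Pn p a := by
    rw [Finset.sum_Ico_eq_sum_range, Finset.sum_Ico_eq_sum_range]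
    have h4 : t + 2 - (i+3) = t - (i+1) := by omega
    rw [h4]
    refine Finset.sum_congr rfl fun k hk => ?_
    rw [Finset.mem_range] at hk
    congr 1
    unfold en; split_ifs <;> omega
  rw [e1, e2, e3]
  have e4 : ∑ j ∈ Finset.Ico 0 t, Pn p j =
      (∑ a ∈ Finset.Ico 0 i, Pn p a) + (Pn p i + ∑ a ∈ Finset.Ico (i+1) t, Pn p a) := by
    rw [← Finset.sum_Ico_consecutive _ (Nat.zero_le i) (by omega : i ≤ t)]
    congr 1
    rw [Finset.sum_eq_sum_Ico_succ_bot (by omega : i < t)]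
  rw [Finset.range_eq_Ico, e4]
  ring

lemma sumQ (p : Finset (Fin (t+1)) → ℝ) (i : ℕ) (hi : i < t) :
    ∑ a ∈ Finset.range (t+1), Qn p (fn i (a+1)) =
      (∑ k ∈ Finset.Ico 1 t, Qn p k) + Qn p i + Qn p (i+1) := by
  rw [Finset.range_eq_Ico]
  rw [← Finset.sum_Ico_consecutive _ (Nat.zero_le (i+1)) (by omega : i+1 ≤ t+1)]
  have e1 : ∑ a ∈ Finset.Ico 0 (i+1), Qn p (fn i (a+1)) = ∑ k ∈ Finset.Ico 1 (i+2), Qn p k := by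
    rw [Finset.sum_Ico_eq_sum_range, Finset.sum_Ico_eq_sum_range]
    have h1 : i + 1 - 0 = i + 2 - 1 := by omega
    rw [h1]
    refine Finset.sum_congr rfl fun k hk => ?_
    rw [Finset.mem_range] at hk
    congr 1
    unfold fn; split_ifs <;> omega
  have e2 : ∑ a ∈ Finset.Ico (i+1) (t+1), Qn p (fn i (a+1)) = ∑ k ∈ Finset.Ico i t, Qn p k := by
    rw [Finset.sum_Ico_eq_sum_range, Finset.sum_Ico_eq_sum_range]
    have h2 : t + 1 - (i+1) = t - i := by omega
    rw [h2]
    refine Finset.sum_congr rfl fun k hk => ?_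
    rw [Finset.mem_range] at hk
    congr 1
    unfold fn; split_ifs <;> omega
  rw [e1, e2]
  rw [Finset.sum_Ico_succ_top (by omega : 1 ≤ i+1)]
  rw [Finset.sum_eq_sum_Ico_succ_bot (by omega : i < t)]
  have e3 : ∑ k ∈ Finset.Ico 1 (i+1), Qn p k + ∑ k ∈ Finset.Ico (i+1) t, Qn p k
      = ∑ k ∈ Finset.Ico 1 t, Qn p k :=
    Finset.sum_Ico_consecutive _ (by omega) (by omega)
  linarith


end EHC

open EHC

/-- For odd `t ≥ 1` there is a homomorphism `ψ` from `F₁` (two isolated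
vertices plus `t` copies of `P_{t+2}`) to `P_t` such that for every normalized
`P_t`-polymatroidal function `p`, `Σ_S −(−1)^{|S|} p(ψ(∩S)) = t + 2`. -/
theorem exists_hom_cliqueSum (t : ℕ) (ht : Odd t) (ht1 : 1 ≤ t) :
    ∃ ψ : F₁ t →g SimpleGraph.pathGraph (t + 1),
      ∀ p : Finset (Fin (t + 1)) → ℝ,
        IsPolymatroidal (SimpleGraph.pathGraph (t + 1)) p →
          cliqueSum (F₁ t) p ψ = t + 2 := by
  refine ⟨ψhom t, fun p hp => ?_⟩
  have hcoe : ⇑(ψhom t) = ψf t := rfl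
  rw [hcoe, cliqueSum_value p hp.1]
  have hPi : ∀ i : Fin t, (∑ a : Fin (t+2), Pn p (en i.val a.val)) =
      (∑ j ∈ Finset.range t, Pn p j) + 2 * Pn p i.val := by
    intro i
    rw [Fin.sum_univ_eq_sum_range (fun a => Pn p (en i.val a))]
    exact sumP p i.val i.isLt
  have hQi : ∀ i : Fin t, (∑ a : Fin (t+1), Qn p (fn i.val (a.val + 1))) =
      (∑ k ∈ Finset.Ico 1 t, Qn p k) + Qn p i.val + Qn p (i.val + 1) := by
    intro i
    rw [Fin.sum_univ_eq_sum_range (fun a => Qn p (fn i.val (a + 1)))]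
    exact sumQ p i.val i.isLt
  rw [Finset.sum_congr rfl (fun i _ => hPi i), Finset.sum_congr rfl (fun i _ => hQi i)]
  rw [Fin.sum_univ_eq_sum_range
    (fun i => (∑ j ∈ Finset.range t, Pn p j) + 2 * Pn p i)]
  rw [Fin.sum_univ_eq_sum_range
    (fun i => (∑ k ∈ Finset.Ico 1 t, Qn p k) + Qn p i + Qn p (i + 1))]
  set SP := ∑ j ∈ Finset.range t, Pn p j with hSP
  set SQ := ∑ k ∈ Finset.Ico 1 t, Qn p k with hSQ
  have hkey : SP - SQ = 1 := key_eq ht1 p hp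
  have hs1 : ∑ i ∈ Finset.range t, (SP + 2 * Pn p i) = (t : ℝ) * SP + 2 * SP := by
    rw [Finset.sum_add_distrib, Finset.sum_const, Finset.card_range, nsmul_eq_mul,
      ← Finset.mul_sum, ← hSP]
  have hq0 : ∑ i ∈ Finset.range t, Qn p i = Qn p 0 + SQ := by
    rw [Finset.range_eq_Ico, Finset.sum_eq_sum_Ico_succ_bot (by omega : 0 < t)]
  have hq1 : ∑ i ∈ Finset.range t, Qn p (i + 1) = SQ + Qn p t := by
    have h1 := Finset.sum_range_succ' (fun i => Qn p i) t
    have h2 : ∑ i ∈ Finset.range (t+1), Qn p i = (Qn p 0 + SQ) + Qn p t := by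
      rw [Finset.sum_range_succ, hq0]
    linarith
  have hs2 : ∑ i ∈ Finset.range t, (SQ + Qn p i + Qn p (i + 1)) =
      (t : ℝ) * SQ + (Qn p 0 + SQ) + (SQ + Qn p t) := by
    rw [Finset.sum_add_distrib, Finset.sum_add_distrib, Finset.sum_const, Finset.card_range,
      nsmul_eq_mul, hq0, hq1]
  rw [hs1, hs2]
  linear_combination ((t : ℝ) + 2) * hkey
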